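/- Let A_n(x) be the polynomials defined by A_0(x) = 1 and A_{n+1}(x) = (n+1)x·A_n(x) + x(1-x)·A_n'(x) (the Eulerian polynomials with A_n(x) = Σ_π x^{des(π)+1} for n ≥ 1). Then for all n ≥ 1, A_{n+1}(x) = A_n(x) + x · Σ_{r=2}^{n+1} C(n, r-2) (1-x)^{n-r+1} A_{r-1}(x). -/

import Mathlib

open Polynomial

private lemma perterm (A : ℕ → Polynomial ℝ)
    (hrec : ∀ n : ℕ, A (n + 1) =
      ((n : Polynomial ℝ) + 1) * X * A n + X * (1 - X) * derivative (A n))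
    (n k : ℕ) (hk : k < n) :
    (((n : Polynomial ℝ) + 1) * X + (1 - X)) *
        ((n.choose k : Polynomial ℝ) * (1 - X) ^ (n - 1 - k) * A (k + 1))
      + X * (1 - X) *
        derivative ((n.choose k : Polynomial ℝ) * (1 - X) ^ (n - 1 - k) * A (k + 1))
    = (n.choose k : Polynomial ℝ) * (1 - X) ^ (n - k) * A (k + 1)
      + (n.choose k : Polynomial ℝ) * (1 - X) ^ (n - 1 - k) * A (k + 2) := by
  set m := n - 1 - k with hm
  have hmk : m + (k + 2) = n + 1 := by omega
  have hnk : n - k = m + 1 := by omega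
  have hcast : (n : Polynomial ℝ) + 1 = (m : Polynomial ℝ) + ((k : Polynomial ℝ) + 2) := by
    have h := congrArg (fun t : ℕ => (t : Polynomial ℝ)) hmk
    push_cast at h
    linear_combination -h
  rw [hnk, hrec (k + 1)]
  rw [derivative_mul, derivative_mul, derivative_pow, derivative_natCast,
    derivative_sub, derivative_one, derivative_X, hcast]
  push_cast
  clear hcast hnk hmk hm
  cases m with
  | zero =>
    simp only [Nat.cast_zero, Polynomial.C_0, Polynomial.C_eq_natCast]
    push_cast
    ring
  | succ m =>
    simp only [Nat.succ_sub_one, Polynomial.C_eq_natCast]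
    push_cast
    ring

private lemma Skey (A : ℕ → Polynomial ℝ)
    (hrec : ∀ n : ℕ, A (n + 1) =
      ((n : Polynomial ℝ) + 1) * X * A n + X * (1 - X) * derivative (A n)) (n : ℕ) :
    (∑ k ∈ Finset.range (n + 1),
        (((n + 1).choose k : Polynomial ℝ)) * (1 - X) ^ (n - k) * A (k + 1))
      = A (n + 1)
        + (((n : Polynomial ℝ) + 1) * X + (1 - X)) *
            (∑ k ∈ Finset.range n, (n.choose k : Polynomial ℝ) * (1 - X) ^ (n - 1 - k) * A (k + 1))
        + X * (1 - X) *
            derivative (∑ k ∈ Finset.range n,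
              (n.choose k : Polynomial ℝ) * (1 - X) ^ (n - 1 - k) * A (k + 1)) := by
  rw [derivative_sum, Finset.mul_sum, Finset.mul_sum, add_assoc, ← Finset.sum_add_distrib]
  have hper : ∑ k ∈ Finset.range n,
      ((((n : Polynomial ℝ) + 1) * X + (1 - X)) *
          ((n.choose k : Polynomial ℝ) * (1 - X) ^ (n - 1 - k) * A (k + 1))
        + X * (1 - X) *
          derivative ((n.choose k : Polynomial ℝ) * (1 - X) ^ (n - 1 - k) * A (k + 1)))
      = ∑ k ∈ Finset.range n,
        ((n.choose k : Polynomial ℝ) * (1 - X) ^ (n - k) * A (k + 1)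
          + (n.choose k : Polynomial ℝ) * (1 - X) ^ (n - 1 - k) * A (k + 2)) := by
    refine Finset.sum_congr rfl fun k hk => ?_
    exact perterm A hrec n k (Finset.mem_range.mp hk)
  rw [hper, Finset.sum_add_distrib]
  -- T1 + A (n+1): turn A (n+1) + T1 into sum over range (n+1)
  have hT1 : A (n + 1) + ∑ k ∈ Finset.range n,
      (n.choose k : Polynomial ℝ) * (1 - X) ^ (n - k) * A (k + 1)
      = ∑ k ∈ Finset.range (n + 1),
        (n.choose k : Polynomial ℝ) * (1 - X) ^ (n - k) * A (k + 1) := by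
    rw [Finset.sum_range_succ, Nat.sub_self, Nat.choose_self]
    push_cast
    ring
  rw [← add_assoc, hT1]
  -- now both sides: peel the first term (k = 0) on both
  rw [Finset.sum_range_succ', Finset.sum_range_succ']
  simp only [Nat.choose_zero_right, Nat.cast_one, Nat.sub_zero]
  conv_rhs => rw [add_right_comm]
  rw [← Finset.sum_add_distrib]
  refine congrArg (· + _) (Finset.sum_congr rfl fun k hk => ?_)
  have h1 : n - (k + 1) = n - 1 - k := by omega
  have h2 : (n + 1).choose (k + 1) = n.choose k + n.choose (k + 1) := Nat.choose_succ_succ n k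
  rw [h1, h2]
  push_cast
  ring

private lemma key (A : ℕ → Polynomial ℝ) (h0 : A 0 = 1)
    (hrec : ∀ n : ℕ, A (n + 1) =
      ((n : Polynomial ℝ) + 1) * X * A n + X * (1 - X) * derivative (A n))
    (n : ℕ) (hn : 1 ≤ n) :
    A (n + 1) = A n + X * ∑ k ∈ Finset.range n,
      (n.choose k : Polynomial ℝ) * (1 - X) ^ (n - 1 - k) * A (k + 1) := by
  induction n, hn using Nat.le_induction with
  | base =>
    have hA1 : A 1 = X := by
      rw [hrec 0, h0]
      simp
    rw [hrec 1]
    simp [hA1]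
    ring
  | succ n hn ih =>
    have hS := Skey A hrec n
    rw [ih] at hS
    rw [hrec (n + 1), ih]
    simp only [Nat.add_sub_cancel]
    rw [derivative_add, derivative_mul, derivative_X]
    push_cast
    linear_combination (-X : Polynomial ℝ) * hS - hrec n + ih

/-- The Eulerian polynomials, defined by `A 0 = 1` and
`A_{n+1} = (n+1)x·A_n + x(1-x)·A_n'`, satisfy for `n ≥ 1`:
`A_{n+1}(x) = A_n(x) + x · Σ_{r=2}^{n+1} C(n, r-2) (1-x)^{n-r+1} A_{r-1}(x)`. -/
theorem eulerian_recurrence (A : ℕ → Polynomial ℝ) (h0 : A 0 = 1)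
    (hrec : ∀ n : ℕ, A (n + 1) =
      ((n : Polynomial ℝ) + 1) * X * A n + X * (1 - X) * derivative (A n))
    (n : ℕ) (hn : 1 ≤ n) :
    A (n + 1) = A n + X * ∑ r ∈ Finset.Icc 2 (n + 1),
      (n.choose (r - 2) : Polynomial ℝ) * (1 - X) ^ (n + 1 - r) * A (r - 1) := by
  have hsum : ∑ r ∈ Finset.Icc 2 (n + 1),
      (n.choose (r - 2) : Polynomial ℝ) * (1 - X) ^ (n + 1 - r) * A (r - 1)
      = ∑ k ∈ Finset.range n,
        (n.choose k : Polynomial ℝ) * (1 - X) ^ (n - 1 - k) * A (k + 1) := by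
    rw [← Finset.Ico_add_one_right_eq_Icc, Finset.sum_Ico_eq_sum_range]
    have hcard : n + 1 + 1 - 2 = n := by omega
    rw [hcard]
    refine Finset.sum_congr rfl fun k hk => ?_
    have e1 : 2 + k - 2 = k := by omega
    have e2 : n + 1 - (2 + k) = n - 1 - k := by omega
    have e3 : 2 + k - 1 = k + 1 := by omega
    rw [e1, e2, e3]
  rw [hsum]
  exact key A h0 hrec n hn
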